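/- Let F be a field, n ≥ 2, and let A'_2, ..., A'_n ∈ Mat((n-1) × (n-1), F) satisfy: (a) the only D' ∈ Mat((n-1) × (n-1), F) with D'A' = A'(D' ⊗ I_{n-1} + I_{n-1} ⊗ D') (where A' = (A'_2 | ... | A'_n)) is D' = 0; and (b) the block-column matrix with blocks A'_i + tr(A'_i)·I_{n-1}, for i = 2,...,n, has rank n-1. Define A = (A_1 | A_2 | ... | A_n) ∈ Mat(n × n², F) where A_1 ∈ Mat(n × n, F) is any matrix with tr(A_1) ≠ 0, and for i ≥ 2, A_i is the block matrix with (1,1)-entry -tr(A'_i), top-right block 0 (row of zeros), bottom-left block an arbitrary column vector ā_{i1} ∈ F^{n-1}, and bottom-right block A'_i. Then the only D ∈ Mat(n × n, F) satisfying DA = A(D ⊗ I_n + I_n ⊗ D) is D = 0. -/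

import Mathlib

open Matrix Kronecker

lemma entry_iff {F : Type*} [Field F] {n : Type*} [Fintype n] [DecidableEq n]
    (C : n → Matrix n n F) (D : Matrix n n F) :
    D * (Matrix.of fun k (p : n × n) => C p.1 k p.2)
      = (Matrix.of fun k (p : n × n) => C p.1 k p.2)
        * (D ⊗ₖ (1 : Matrix n n F) + (1 : Matrix n n F) ⊗ₖ D)
    ↔ ∀ k i j, ∑ l, D k l * C i l j
        = (∑ p, C p k j * D p i) + ∑ q, C i k q * D q j := by
  rw [← Matrix.ext_iff]
  constructor
  · intro h k i j
    have := h k (i, j)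
    simpa [Matrix.mul_apply, Matrix.one_apply, Fintype.sum_prod_type, mul_add, add_mul,
      mul_ite, ite_mul, Finset.sum_add_distrib] using this
  · intro h k p
    obtain ⟨i, j⟩ := p
    have := h k i j
    simpa [Matrix.mul_apply, Matrix.one_apply, Fintype.sum_prod_type, mul_add, add_mul,
      mul_ite, ite_mul, Finset.sum_add_distrib] using this

lemma rank_ker {F : Type*} [Field F] {m : ℕ} (M : Matrix (Fin m × Fin m) (Fin m) F)
    (h : M.rank = m) (d : Fin m → F) (hd : M.mulVec d = 0) : d = 0 := by
  have h1 := LinearMap.finrank_range_add_finrank_ker (M.mulVecLin)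
  rw [Module.finrank_pi, Fintype.card_fin] at h1
  rw [Matrix.rank] at h
  have hk : Module.finrank F (LinearMap.ker M.mulVecLin) = 0 := by omega
  have h2 : LinearMap.ker M.mulVecLin = ⊥ := Submodule.finrank_eq_zero.mp hk
  have h3 : d ∈ LinearMap.ker M.mulVecLin := by simpa [Matrix.mulVecLin_apply] using hd
  simpa [h2] using h3

/-- Inductive construction of an n-dimensional algebra (n = m+1 ≥ 2) with only the
trivial derivation, from an (n-1)-dimensional system A'₂,...,A'ₙ with (a) only the
trivial derivation and (b) the block-column matrix with blocks A'ᵢ + tr(A'ᵢ)·I of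
rank n-1.  The new blocks are A₁ arbitrary with tr(A₁) ≠ 0, and for i ≥ 2 the block
matrix with (1,1)-entry -tr(A'ᵢ), zero top-right row, arbitrary bottom-left column
ā i, and bottom-right block A'ᵢ. -/
theorem stmt_8 {F : Type*} [Field F] (m : ℕ) (hm : 1 ≤ m)
    (A' : Fin m → Matrix (Fin m) (Fin m) F)
    (ha : ∀ D' : Matrix (Fin m) (Fin m) F,
      D' * (Matrix.of fun k (p : Fin m × Fin m) => A' p.1 k p.2)
        = (Matrix.of fun k (p : Fin m × Fin m) => A' p.1 k p.2)
          * (D' ⊗ₖ (1 : Matrix (Fin m) (Fin m) F)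
             + (1 : Matrix (Fin m) (Fin m) F) ⊗ₖ D') → D' = 0)
    (hb : (Matrix.of fun (p : Fin m × Fin m) (j : Fin m) =>
        (A' p.1 + (A' p.1).trace • (1 : Matrix (Fin m) (Fin m) F)) p.2 j).rank = m)
    (A₁ : Matrix (Fin (m + 1)) (Fin (m + 1)) F) (htr : A₁.trace ≠ 0)
    (abar : Fin m → Fin m → F)
    (B : Fin (m + 1) → Matrix (Fin (m + 1)) (Fin (m + 1)) F)
    (hB0 : B 0 = A₁)
    (hBi : ∀ i : Fin m, B i.succ = Matrix.of
      (Fin.cons (Fin.cons (-(A' i).trace) (0 : Fin m → F))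
        (fun k : Fin m => Fin.cons (abar i k) (A' i k)))) :
    ∀ D : Matrix (Fin (m + 1)) (Fin (m + 1)) F,
      D * (Matrix.of fun k (p : Fin (m + 1) × Fin (m + 1)) => B p.1 k p.2)
        = (Matrix.of fun k (p : Fin (m + 1) × Fin (m + 1)) => B p.1 k p.2)
          * (D ⊗ₖ (1 : Matrix (Fin (m + 1)) (Fin (m + 1)) F)
             + (1 : Matrix (Fin (m + 1)) (Fin (m + 1)) F) ⊗ₖ D) → D = 0 := by
  intro D hD
  rw [entry_iff] at hD
  have htrB : ∀ p : Fin m, (B p.succ).trace = 0 := by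
    intro p
    rw [hBi p]
    simp [Matrix.trace, Matrix.diag, Fin.sum_univ_succ]
  -- Step 1: first row of D vanishes
  have hrow0 : ∀ i, D 0 i = 0 := by
    intro i
    have h1 : ∑ k, ∑ l, D k l * B i l k
        = (∑ k, ∑ p, B p k k * D p i) + ∑ k, ∑ q, B i k q * D q k := by
      rw [← Finset.sum_add_distrib]
      exact Finset.sum_congr rfl fun k _ => hD k i k
    have h2 : ∑ k, ∑ l, D k l * B i l k = ∑ k, ∑ q, B i k q * D q k := by
      rw [Finset.sum_comm]
      exact Finset.sum_congr rfl fun l _ => Finset.sum_congr rfl fun k _ => mul_comm _ _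
    rw [h2] at h1
    have h3 : ∑ k, ∑ p, B p k k * D p i = 0 := (right_eq_add.mp h1)
    have h4 : ∑ p : Fin (m+1), (B p).trace * D p i = 0 := by
      calc ∑ p : Fin (m+1), (B p).trace * D p i
          = ∑ p, ∑ k, B p k k * D p i := by
            simp [Matrix.trace, Matrix.diag, Finset.sum_mul]
        _ = ∑ k, ∑ p, B p k k * D p i := Finset.sum_comm
        _ = 0 := h3
    rw [Fin.sum_univ_succ] at h4
    simp only [htrB, zero_mul, Finset.sum_const_zero, add_zero, hB0] at h4
    exact (mul_eq_zero.mp h4).resolve_left htr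
  -- Step 2: bottom-right block of D vanishes
  have hD' : (Matrix.of fun k l : Fin m => D k.succ l.succ) = 0 := by
    apply ha
    rw [entry_iff]
    intro k i j
    have h := hD k.succ i.succ j.succ
    rw [Fin.sum_univ_succ, Fin.sum_univ_succ, Fin.sum_univ_succ] at h
    simpa [hBi, hB0, hrow0] using h
  have hD'0 : ∀ k l : Fin m, D k.succ l.succ = 0 := by
    intro k l
    have := congrFun (congrFun hD' k) l
    simpa using this
  -- Step 3: bottom-left column of D vanishes
  have hcol0 : (fun q : Fin m => D q.succ 0) = 0 := by
    apply rank_ker _ hb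
    funext p
    obtain ⟨i, k⟩ := p
    have h := hD k.succ i.succ 0
    rw [Fin.sum_univ_succ, Fin.sum_univ_succ, Fin.sum_univ_succ] at h
    simp only [hBi, hB0, hrow0, hD'0, Matrix.of_apply, Fin.cons_zero, Fin.cons_succ,
      mul_zero, zero_mul, Finset.sum_const_zero, add_zero, zero_add, Pi.zero_apply] at h
    simp only [Matrix.mulVec, dotProduct, Matrix.of_apply, Matrix.add_apply,
      Matrix.smul_apply, Matrix.one_apply, smul_eq_mul, Pi.zero_apply]
    have heq : (∑ j, (A' i k j + (A' i).trace * if k = j then 1 else 0) * D j.succ 0)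
        = (∑ j, A' i k j * D j.succ 0) + (A' i).trace * D k.succ 0 := by
      simp only [add_mul, Finset.sum_add_distrib, mul_assoc, ite_mul, one_mul, zero_mul,
        mul_ite, mul_zero]
      simp [Finset.sum_ite_eq]
    rw [heq]
    linear_combination -h
  -- Conclusion
  ext k l
  simp only [Matrix.zero_apply]
  induction k using Fin.cases with
  | zero => exact hrow0 l
  | succ k =>
    induction l using Fin.cases with
    | zero => exact congrFun hcol0 k
    | succ l => exact hD'0 k l
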